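/- Let A ∈ ℝ^{n×n} be a symmetric pentadiagonal Toeplitz matrix with diagonal entries 2(k₁+k₂), first off-diagonal entries -k₁, and second off-diagonal entries -k₂, where k₁ > 0, k₂ < 0 and k₁ + 4k₂ > 0. Then A is positive definite. -/

import Mathlib

set_option maxHeartbeats 1000000 in
/-- The symmetric pentadiagonal Toeplitz matrix with diagonal `2(k₁+k₂)`,
first off-diagonals `-k₁` and second off-diagonals `-k₂` is positive definite
whenever `k₁ > 0`, `k₂ < 0` and `k₁ + 4k₂ > 0`. -/
theorem stmt_7 {n : ℕ} (k₁ k₂ : ℝ) (hk₁ : 0 < k₁) (hk₂ : k₂ < 0)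
    (hstab : 0 < k₁ + 4 * k₂)
    (A : Matrix (Fin n) (Fin n) ℝ)
    (hA : ∀ i j : Fin n, A i j =
      if (i : ℤ) = (j : ℤ) then 2 * (k₁ + k₂)
      else if |(i : ℤ) - (j : ℤ)| = 1 then -k₁
      else if |(i : ℤ) - (j : ℤ)| = 2 then -k₂
      else 0) :
    A.PosDef := by
  classical
  rw [Matrix.posDef_iff_dotProduct_mulVec]
  constructor
  · ext i j
    rw [Matrix.conjTranspose_apply, hA, hA, star_trivial,
      abs_sub_comm ((j : ℤ)) ((i : ℤ))]
    split_ifs <;> first | rfl | omega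
  · intro x hx
    set x' : ℕ → ℝ := fun i => if h : i < n then x ⟨i, h⟩ else 0 with hx'def
    have hx'zero : ∀ m, n ≤ m → x' m = 0 := by
      intro m hm; simp [hx'def, Nat.not_lt.mpr hm]
    have hx'eq : ∀ i : Fin n, x' i.val = x i := by
      intro i; simp [hx'def, i.isLt]
    set y : ℕ → ℝ := fun j => if 2 ≤ j then x' (j - 2) else 0 with hydef
    have hy2 : ∀ i, y (i + 2) = x' i := by
      intro i; simp [hydef]
    have hy0 : y 0 = 0 := by simp [hydef]
    have hy1 : y 1 = 0 := by simp [hydef]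
    have hyA : ∀ i, y (i + 1 + 1) = x' i := hy2
    have hyB : ∀ i, y (i + 1 + 1 + 1) = x' (i + 1) := fun i => hy2 (i + 1)
    have hyC : ∀ i, y (i + 1 + 1 + 2) = x' (i + 2) := fun i => hy2 (i + 2)
    set S := ∑ i ∈ Finset.range n, x' i ^ 2 with hSdef
    set P1 := ∑ i ∈ Finset.range n, x' i * x' (i + 1) with hP1def
    set P2 := ∑ i ∈ Finset.range n, x' i * x' (i + 2) with hP2def
    set D := ∑ i ∈ Finset.range (n + 2), (y (i + 1) - y i) ^ 2 with hDdef
    set E := ∑ i ∈ Finset.range (n + 2), (y (i + 2) - y i) ^ 2 with hEdef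
    -- sum conversions
    have h1 : ∑ i ∈ Finset.range (n + 2), y i ^ 2 = S := by
      rw [Finset.sum_range_succ', Finset.sum_range_succ']
      simp [hy0, hy1, hyA, hSdef]
    have h2 : ∑ i ∈ Finset.range (n + 2), y (i + 1) ^ 2 = S := by
      have e1 := Finset.sum_range_succ' (fun i => y i ^ 2) (n + 2)
      have e2 := Finset.sum_range_succ (fun i => y i ^ 2) (n + 2)
      have hn2 : y (n + 2) = 0 := by rw [hy2]; exact hx'zero n le_rfl
      rw [e2, h1, hn2] at e1
      rw [hy0] at e1
      simpa using e1.symm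
    have h3 : ∑ i ∈ Finset.range (n + 2), y (i + 2) ^ 2 = S := by
      have e1 := Finset.sum_range_succ' (fun i => y i ^ 2) (n + 3)
      have e2 := Finset.sum_range_succ' (fun i => y (i + 1) ^ 2) (n + 2)
      have e3 := Finset.sum_range_succ (fun i => y i ^ 2) (n + 3)
      have e4 := Finset.sum_range_succ (fun i => y i ^ 2) (n + 2)
      have hn2 : y (n + 2) = 0 := by rw [hy2]; exact hx'zero n le_rfl
      have hn3 : y (n + 3) = 0 := by
        have := hy2 (n + 1); rw [show n + 1 + 2 = n + 3 by ring] at this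
        rw [this]; exact hx'zero (n + 1) (by omega)
      -- e1 : ∑ range (n+4) y i ^2 = ∑ range (n+3), y (i+1)^2 + y 0 ^2
      -- e3 : ∑ range (n+4) y i ^2 = ∑ range (n+3) y i ^2 + y (n+3) ^2
      -- e4 : ∑ range (n+3) y i ^2 = ∑ range (n+2) y i ^2 + y (n+2) ^2
      -- e2 : ∑ range (n+3) y (i+1)^2 = ∑ range (n+2) y (i+1+1)^2 + y 1 ^ 2
      simp only [show n + 3 + 1 = n + 4 from rfl, show n + 2 + 1 = n + 3 from rfl] at *
      rw [e3, e4, h1, hn2, hn3] at e1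
      rw [e2, hy1, hy0] at e1
      have : ∑ i ∈ Finset.range (n + 2), y (i + 1 + 1) ^ 2
          = ∑ i ∈ Finset.range (n + 2), y (i + 2) ^ 2 := rfl
      rw [this] at e1
      simpa using e1.symm
    have h4 : ∑ i ∈ Finset.range (n + 2), y i * y (i + 1) = P1 := by
      rw [Finset.sum_range_succ', Finset.sum_range_succ']
      simp only [hy0, hy1, hyA, hyB, zero_mul, mul_zero, add_zero]
      exact hP1def.symm
    have h5 : ∑ i ∈ Finset.range (n + 2), y i * y (i + 2) = P2 := by
      rw [Finset.sum_range_succ', Finset.sum_range_succ']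
      simp only [hy0, hy1, hyA, hyC, zero_mul, mul_zero, add_zero]
      exact hP2def.symm
    have hDval : D = 2 * S - 2 * P1 := by
      have e : ∀ i ∈ Finset.range (n + 2),
          (y (i + 1) - y i) ^ 2 = y (i + 1) ^ 2 + y i ^ 2 - 2 * (y i * y (i + 1)) := by
        intros; ring
      rw [hDdef, Finset.sum_congr rfl e, Finset.sum_sub_distrib, Finset.sum_add_distrib,
        ← Finset.mul_sum, h2, h1, h4]
      ring
    have hEval : E = 2 * S - 2 * P2 := by
      have e : ∀ i ∈ Finset.range (n + 2),
          (y (i + 2) - y i) ^ 2 = y (i + 2) ^ 2 + y i ^ 2 - 2 * (y i * y (i + 2)) := by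
        intros; ring
      rw [hEdef, Finset.sum_congr rfl e, Finset.sum_sub_distrib, Finset.sum_add_distrib,
        ← Finset.mul_sum, h3, h1, h5]
      ring
    -- quadratic form identity
    set B : ℕ → ℕ → ℝ := fun i j =>
      if (i : ℤ) = (j : ℤ) then 2 * (k₁ + k₂)
      else if |(i : ℤ) - (j : ℤ)| = 1 then -k₁
      else if |(i : ℤ) - (j : ℤ)| = 2 then -k₂
      else 0 with hBdef
    have hBsplit : ∀ i j : ℕ, B i j
        = (if j = i then 2*(k₁+k₂) else 0) + (if j = i+1 then -k₁ else 0)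
          + (if i = j+1 then -k₁ else 0) + (if j = i+2 then -k₂ else 0)
          + (if i = j+2 then -k₂ else 0) := by
      intro i j
      rw [hBdef]
      dsimp only
      rcases le_total (j:ℤ) (i:ℤ) with h | h
      · rw [abs_of_nonneg (by omega : (0:ℤ) ≤ (i:ℤ) - j)]
        split_ifs <;> first | ring1 | (exfalso; omega)
      · rw [abs_of_nonpos (by omega : ((i:ℤ) - j) ≤ 0)]
        split_ifs <;> first | ring1 | (exfalso; omega)
    have hdelta : ∀ (c r : ℝ) (m : ℕ),
        (∑ j ∈ Finset.range n, r * ((if j = m then c else 0) * x' j)) = r * (c * x' m) := by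
      intro c r m
      simp only [ite_mul, zero_mul, mul_ite, mul_zero]
      rw [Finset.sum_ite_eq' (Finset.range n) m (fun j => r * (c * x' j))]
      split_ifs with h
      · rfl
      · rw [hx'zero m (by simpa using h)]; ring
    have hq2 : dotProduct (star x) (A.mulVec x)
        = ∑ i ∈ Finset.range n, ∑ j ∈ Finset.range n, x' i * (B i j * x' j) := by
      have hq1 : dotProduct (star x) (A.mulVec x)
          = ∑ i : Fin n, ∑ j : Fin n, x' i.val * (B i.val j.val * x' j.val) := by
        simp only [dotProduct, Matrix.mulVec, Pi.star_apply, star_trivial,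
          Finset.mul_sum]
        apply Finset.sum_congr rfl; intro i _
        apply Finset.sum_congr rfl; intro j _
        rw [hA, hx'eq, hx'eq, hBdef]
      rw [hq1]
      rw [← Fin.sum_univ_eq_sum_range
        (fun i => ∑ j ∈ Finset.range n, x' i * (B i j * x' j)) n]
      exact Finset.sum_congr rfl fun i _ =>
        Fin.sum_univ_eq_sum_range (fun j => x' i.val * (B i.val j * x' j)) n
    have hrow : ∀ i ∈ Finset.range n,
        ∑ j ∈ Finset.range n, x' i * (B i j * x' j)
        = (x' i * ((2*(k₁+k₂)) * x' i) + x' i * ((-k₁) * x' (i+1)) + x' i * ((-k₂) * x' (i+2)))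
          + ∑ j ∈ Finset.range n, x' i * ((if i = j+1 then -k₁ else 0) * x' j)
          + ∑ j ∈ Finset.range n, x' i * ((if i = j+2 then -k₂ else 0) * x' j) := by
      intro i _
      have expand : ∀ j ∈ Finset.range n, x' i * (B i j * x' j)
          = x' i * ((if j = i then 2*(k₁+k₂) else 0) * x' j)
            + x' i * ((if j = i+1 then -k₁ else 0) * x' j)
            + x' i * ((if i = j+1 then -k₁ else 0) * x' j)
            + x' i * ((if j = i+2 then -k₂ else 0) * x' j)
            + x' i * ((if i = j+2 then -k₂ else 0) * x' j) := by
        intro j _; rw [hBsplit i j]; ring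
      rw [Finset.sum_congr rfl expand, Finset.sum_add_distrib, Finset.sum_add_distrib,
        Finset.sum_add_distrib, Finset.sum_add_distrib, hdelta, hdelta, hdelta]
      ring
    have hswap1 : ∑ i ∈ Finset.range n, ∑ j ∈ Finset.range n,
        x' i * ((if i = j+1 then -k₁ else 0) * x' j) = (-k₁) * P1 := by
      rw [Finset.sum_comm]
      have hinner : ∀ j ∈ Finset.range n,
          ∑ i ∈ Finset.range n, x' i * ((if i = j+1 then -k₁ else 0) * x' j)
          = x' j * ((-k₁) * x' (j+1)) := by
        intro j _
        have e : ∀ i ∈ Finset.range n,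
            x' i * ((if i = j+1 then -k₁ else 0) * x' j)
            = if i = j + 1 then x' i * ((-k₁) * x' j) else 0 := by
          intro i _; split_ifs <;> simp
        rw [Finset.sum_congr rfl e,
          Finset.sum_ite_eq' (Finset.range n) (j+1) (fun i => x' i * ((-k₁) * x' j))]
        split_ifs with h
        · ring
        · rw [hx'zero (j+1) (by simpa using h)]; ring
      rw [Finset.sum_congr rfl hinner, hP1def, Finset.mul_sum]
      exact Finset.sum_congr rfl fun j _ => by ring
    have hswap2 : ∑ i ∈ Finset.range n, ∑ j ∈ Finset.range n,
        x' i * ((if i = j+2 then -k₂ else 0) * x' j) = (-k₂) * P2 := by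
      rw [Finset.sum_comm]
      have hinner : ∀ j ∈ Finset.range n,
          ∑ i ∈ Finset.range n, x' i * ((if i = j+2 then -k₂ else 0) * x' j)
          = x' j * ((-k₂) * x' (j+2)) := by
        intro j _
        have e : ∀ i ∈ Finset.range n,
            x' i * ((if i = j+2 then -k₂ else 0) * x' j)
            = if i = j + 2 then x' i * ((-k₂) * x' j) else 0 := by
          intro i _; split_ifs <;> simp
        rw [Finset.sum_congr rfl e,
          Finset.sum_ite_eq' (Finset.range n) (j+2) (fun i => x' i * ((-k₂) * x' j))]
        split_ifs with h
        · ring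
        · rw [hx'zero (j+2) (by simpa using h)]; ring
      rw [Finset.sum_congr rfl hinner, hP2def, Finset.mul_sum]
      exact Finset.sum_congr rfl fun j _ => by ring
    have hQ : dotProduct (star x) (A.mulVec x) = k₁ * D + k₂ * E := by
      rw [hq2, Finset.sum_congr rfl hrow, Finset.sum_add_distrib, Finset.sum_add_distrib,
        hswap1, hswap2]
      have hex : ∑ i ∈ Finset.range n,
          (x' i * ((2*(k₁+k₂)) * x' i) + x' i * ((-k₁) * x' (i+1)) + x' i * ((-k₂) * x' (i+2)))
          = 2*(k₁+k₂)*S + (-k₁)*P1 + (-k₂)*P2 := by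
        rw [Finset.sum_add_distrib, Finset.sum_add_distrib, hSdef, hP1def, hP2def,
          Finset.mul_sum, Finset.mul_sum, Finset.mul_sum]
        congr 1
        congr 1
        · exact Finset.sum_congr rfl fun i _ => by ring
        · exact Finset.sum_congr rfl fun i _ => by ring
        · exact Finset.sum_congr rfl fun i _ => by ring
      rw [hex, hDval, hEval]
      ring
    -- shifted difference sum equals D
    have hn2 : y (n + 2) = 0 := by rw [hy2]; exact hx'zero n le_rfl
    have hn3 : y (n + 3) = 0 := by
      have e := hy2 (n + 1)
      rw [show n + 1 + 2 = n + 3 from rfl] at e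
      rw [e]; exact hx'zero (n + 1) (by omega)
    have hD' : ∑ i ∈ Finset.range (n + 2), (y (i + 2) - y (i + 1)) ^ 2 = D := by
      have e1 := Finset.sum_range_succ' (fun i => (y (i + 1) - y i) ^ 2) (n + 2)
      have e2 := Finset.sum_range_succ (fun i => (y (i + 1) - y i) ^ 2) (n + 2)
      rw [e2] at e1
      simp only [hy0, hy1, hn2, hn3] at e1
      have hfun : ∑ i ∈ Finset.range (n + 2), (y (i + 1 + 1) - y (i + 1)) ^ 2
          = ∑ i ∈ Finset.range (n + 2), (y (i + 2) - y (i + 1)) ^ 2 := rfl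
      rw [hfun] at e1
      rw [hDdef]
      simpa using e1.symm
    have hE4D : E ≤ 4 * D := by
      have hpt : ∀ i ∈ Finset.range (n + 2),
          (y (i + 2) - y i) ^ 2 ≤ 2 * (y (i + 2) - y (i + 1)) ^ 2 + 2 * (y (i + 1) - y i) ^ 2 := by
        intro i _
        nlinarith [sq_nonneg ((y (i + 2) - y (i + 1)) - (y (i + 1) - y i))]
      calc E ≤ ∑ i ∈ Finset.range (n + 2),
            (2 * (y (i + 2) - y (i + 1)) ^ 2 + 2 * (y (i + 1) - y i) ^ 2) := by
            rw [hEdef]; exact Finset.sum_le_sum hpt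
        _ = 2 * (∑ i ∈ Finset.range (n + 2), (y (i + 2) - y (i + 1)) ^ 2)
            + 2 * (∑ i ∈ Finset.range (n + 2), (y (i + 1) - y i) ^ 2) := by
            rw [Finset.sum_add_distrib, Finset.mul_sum, Finset.mul_sum]
        _ = 4 * D := by rw [hD', ← hDdef]; ring
    have hDpos : 0 < D := by
      rcases (Finset.sum_nonneg fun i _ => sq_nonneg _ : (0:ℝ) ≤ D).lt_or_eq with h | h
      · exact h
      · exfalso
        have hD0 : ∑ i ∈ Finset.range (n + 2), (y (i + 1) - y i) ^ 2 = 0 := by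
          rw [← hDdef]; exact h.symm
        have hz := (Finset.sum_eq_zero_iff_of_nonneg fun i _ => sq_nonneg _).mp hD0
        have hyz : ∀ j, j ≤ n + 2 → y j = 0 := by
          intro j
          induction j with
          | zero => intro _; exact hy0
          | succ j ih =>
            intro hj
            have h1 := hz j (Finset.mem_range.mpr (by omega))
            have h2 : y (j + 1) - y j = 0 := by
              exact pow_eq_zero_iff two_ne_zero |>.mp h1
            have h3 := ih (by omega)
            linarith
        obtain ⟨i0, hi0⟩ := Function.ne_iff.mp hx
        apply hi0
        rw [← hx'eq i0, ← hy2 i0.val]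
        simp only [Pi.zero_apply]
        exact hyz _ (by have := i0.isLt; omega)
    rw [hQ]
    nlinarith [mul_pos hstab hDpos,
      mul_nonneg (le_of_lt (neg_pos.mpr hk₂)) (sub_nonneg.mpr hE4D)]
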